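/- Let f be a measurable predictor, I = {I_1, …, I_B} a fixed finite measurable partition of (0,1], and S = {(X_m, Y_m)}_{m=1}^n an i.i.d. sample from D. Then the binned true calibration error is dominated in expectation by the expected calibration error: TCE(f_I) ≤ E_S[ECE(f, S)]. -/
import Mathlib


open MeasureTheory Set

noncomputable section

namespace Calib

variable {X : Type*} [MeasurableSpace X]

/-- Bin loss `l_I(z) = (y - f(x)) · 1_{f(x) ∈ I}`. -/
def binLoss (f : X → ℝ) (I : Set ℝ) (z : X × ℝ) : ℝ :=
  (z.2 - f z.1) * I.indicator (fun _ => (1 : ℝ)) (f z.1)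

/-- Sum-form TCE of the binned predictor: `Σ_i |E[(Y - f(X)) · 1_{f(X) ∈ I_i}]|`. -/
def TCEsum (D : Measure (X × ℝ)) (f : X → ℝ) {B : ℕ} (I : Fin B → Set ℝ) : ℝ :=
  ∑ i, |∫ z, binLoss f (I i) z ∂D|

/-- Expected calibration error of `f` over a finite sample `S` with bins `I`. -/
def ECE (f : X → ℝ) {B : ℕ} (I : Fin B → Set ℝ) {n : ℕ} (S : Fin n → X × ℝ) : ℝ :=
  ∑ i, |(1 / (n : ℝ)) * ∑ m, binLoss f (I i) (S m)|

/-- Conditional mean `E[f(X) | f(X) ∈ I]` (zero if the conditioning event is null). -/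
def condMean (D : Measure (X × ℝ)) (f : X → ℝ) (I : Set ℝ) : ℝ :=
  (∫ z, I.indicator (fun _ => f z.1) (f z.1) ∂D) / (D {z | f z.1 ∈ I}).toReal

/-- Binned predictor `f_I(x) = Σ_i E[f(X) | f(X) ∈ I_i] · 1_{f(x) ∈ I_i}`. -/
def binnedPred (D : Measure (X × ℝ)) (f : X → ℝ) {B : ℕ} (I : Fin B → Set ℝ) (x : X) : ℝ :=
  ∑ i, condMean D f (I i) * (I i).indicator (fun _ => (1 : ℝ)) (f x)

/-- The conditional expectation `E[Y | g(X)]` as a function on `X × ℝ`. -/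
def condY (D : Measure (X × ℝ)) (g : X → ℝ) : X × ℝ → ℝ :=
  D[(fun w : X × ℝ => w.2) | MeasurableSpace.comap (fun w : X × ℝ => g w.1) inferInstance]

/-- True calibration error `TCE(g) = E|E[Y | g(X)] - g(X)|`. -/
def TCE (D : Measure (X × ℝ)) (g : X → ℝ) : ℝ :=
  ∫ z, |condY D g z - g z.1| ∂D

/-- `I` is a finite measurable partition of `(0,1]`. -/
def IsBinning {B : ℕ} (I : Fin B → Set ℝ) : Prop :=
  (∀ i, MeasurableSet (I i)) ∧ Pairwise (Function.onFun Disjoint I) ∧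
    (⋃ i, I i) = Set.Ioc (0 : ℝ) 1

/-- Uniform-width binning: `I_i = (i/B, (i+1)/B]` for `i = 0, …, B-1`. -/
def uwb (B : ℕ) (i : Fin B) : Set ℝ :=
  Set.Ioc ((i : ℝ) / B) (((i : ℝ) + 1) / B)

/-- The `i`-th value (0-indexed) of the nondecreasing rearrangement of `v`. -/
def orderStat {n : ℕ} (v : Fin n → ℝ) (i : Fin n) : ℝ :=
  (v ∘ Tuple.sort v) i

/-- Boundaries for uniform-mass binning: `u_0 = 0`, `u_b = f_(⌊nb/B⌋)` for `1 ≤ b ≤ B-1`,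
`u_B = 1`. -/
def umbBoundary {n : ℕ} (v : Fin n → ℝ) (B b : ℕ) : ℝ :=
  if b = 0 then 0
  else if b < B then
    if h : n * b / B - 1 < n then orderStat v ⟨n * b / B - 1, h⟩ else 1
  else 1

/-- Uniform-mass binning built from the values `v = (f(x_1), …, f(x_n))`:
`I_b = (u_{b-1}, u_b]`. -/
def umb {n : ℕ} (v : Fin n → ℝ) (B : ℕ) (i : Fin B) : Set ℝ :=
  Set.Ioc (umbBoundary v B i.val) (umbBoundary v B (i.val + 1))

/-- Lipschitz calibration assumption: there is an `L`-Lipschitz `g : [0,1] → [0,1]` with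
`E[Y | f(X)] = g(f(X))` a.s. -/
def LipCalib (D : Measure (X × ℝ)) (f : X → ℝ) (L : ℝ) : Prop :=
  ∃ g : ℝ → ℝ, (∀ u ∈ Set.Icc (0 : ℝ) 1, g u ∈ Set.Icc (0 : ℝ) 1) ∧
    (∀ u ∈ Set.Icc (0 : ℝ) 1, ∀ v ∈ Set.Icc (0 : ℝ) 1, |g u - g v| ≤ L * |u - v|) ∧
    condY D f =ᵐ[D] fun w => g (f w.1)


omit [MeasurableSpace X] in
lemma binLoss_bound {f : X → ℝ} (hrange : ∀ x, f x ∈ Set.Icc (0 : ℝ) 1)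
    {I : Set ℝ} {z : X × ℝ} (hz : z.2 = 0 ∨ z.2 = 1) :
    ‖binLoss f I z‖ ≤ 1 := by
  have h1 : |z.2 - f z.1| ≤ 1 := by
    obtain ⟨h0, hle⟩ := hrange z.1
    rcases hz with h | h <;> rw [h, abs_le] <;> constructor <;> linarith
  have h2 : |I.indicator (fun _ => (1 : ℝ)) (f z.1)| ≤ 1 := by
    by_cases h : f z.1 ∈ I <;> simp [indicator_apply, h]
  calc ‖binLoss f I z‖ = |z.2 - f z.1| * |I.indicator (fun _ => (1 : ℝ)) (f z.1)| := by
        rw [binLoss]; exact abs_mul _ _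
    _ ≤ 1 * 1 := mul_le_mul h1 h2 (abs_nonneg _) zero_le_one
    _ = 1 := one_mul 1

lemma binLoss_meas {f : X → ℝ} (hf : Measurable f) {I : Set ℝ} (hI : MeasurableSet I) :
    Measurable (binLoss f I) :=
  (measurable_snd.sub (hf.comp measurable_fst)).mul
    ((measurable_const.indicator hI).comp (hf.comp measurable_fst))

lemma binLoss_int (D : Measure (X × ℝ)) [IsProbabilityMeasure D]
    (hY : ∀ᵐ z ∂D, z.2 = 0 ∨ z.2 = 1)
    {f : X → ℝ} (hf : Measurable f) (hrange : ∀ x, f x ∈ Set.Icc (0 : ℝ) 1)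
    {I : Set ℝ} (hI : MeasurableSet I) :
    Integrable (binLoss f I) D := by
  refine ⟨(binLoss_meas hf hI).aestronglyMeasurable, ?_⟩
  exact (hasFiniteIntegral_const (1:ℝ)).mono' (hY.mono fun z hz => binLoss_bound hrange hz)

lemma pi_map_eval {n : ℕ} {α : Type*} [MeasurableSpace α] (D : Measure α)
    [IsProbabilityMeasure D] (m : Fin n) :
    MeasurePreserving (fun S : Fin n → α => S m)
      (Measure.pi fun _ : Fin n => D) D := by
  refine ⟨measurable_pi_apply m, ?_⟩
  ext s hs
  rw [Measure.map_apply (measurable_pi_apply m) hs]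
  rw [show (fun S : Fin n → α => S m) ⁻¹' s = Set.pi univ (Function.update (fun _ => univ) m s)
      from Set.eval_preimage, Measure.pi_pi]
  rw [Fintype.prod_eq_single m (fun j hj => by simp [Function.update_of_ne hj])]
  simp

/-- For a fixed finite measurable partition `I` of `(0,1]` and an i.i.d.
sample `S` of size `n` from `D`, the binned true calibration error is dominated in
expectation by the expected calibration error: `TCE(f_I) ≤ E_S[ECE(f, S)]`. -/
theorem tceSum_le_expectation_ece
    (D : Measure (X × ℝ)) [IsProbabilityMeasure D]
    (hY : ∀ᵐ z ∂D, z.2 = 0 ∨ z.2 = 1)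
    (f : X → ℝ) (hf : Measurable f) (hrange : ∀ x, f x ∈ Set.Icc (0 : ℝ) 1)
    {B : ℕ} (I : Fin B → Set ℝ) (hI : IsBinning I)
    (n : ℕ) (hn : 0 < n) :
    TCEsum D f I ≤ ∫ S, ECE f I S ∂(Measure.pi fun _ : Fin n => D) := by
  obtain ⟨hmeasI, -, -⟩ := hI
  simp only [TCEsum, ECE]
  set μ := (Measure.pi fun _ : Fin n => D) with hμ
  have hint : ∀ i, Integrable (binLoss f (I i)) D :=
    fun i => binLoss_int D hY hf hrange (hmeasI i)
  have hcomp : ∀ (i : Fin B) (m : Fin n),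
      Integrable (fun S : Fin n → X × ℝ => binLoss f (I i) (S m)) μ :=
    fun i m => (pi_map_eval D m).integrable_comp (hint i).aestronglyMeasurable |>.mpr (hint i)
  have hF : ∀ i, Integrable (fun S : Fin n → X × ℝ =>
      (1 / (n : ℝ)) * ∑ m, binLoss f (I i) (S m)) μ := by
    intro i
    exact (integrable_finset_sum _ (fun m _ => hcomp i m)).const_mul _
  have heq : ∀ i, ∫ z, binLoss f (I i) z ∂D
      = ∫ S, (1 / (n : ℝ)) * ∑ m, binLoss f (I i) (S m) ∂μ := by
    intro i
    rw [integral_const_mul, integral_finset_sum _ (fun m _ => hcomp i m)]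
    have hm : ∀ m : Fin n, ∫ S, binLoss f (I i) (S m) ∂μ = ∫ z, binLoss f (I i) z ∂D := by
      intro m
      have h := (pi_map_eval (n := n) D m).map_eq
      rw [← h, integral_map (measurable_pi_apply m).aemeasurable
        (h.symm ▸ (hint i).aestronglyMeasurable)]
    simp_rw [hm]
    rw [Finset.sum_const, Finset.card_univ, Fintype.card_fin, nsmul_eq_mul]
    have hn' : (n : ℝ) ≠ 0 := Nat.cast_ne_zero.mpr hn.ne'
    field_simp
  calc (∑ i, |∫ z, binLoss f (I i) z ∂D|)
      = ∑ i, |∫ S, (1 / (n : ℝ)) * ∑ m, binLoss f (I i) (S m) ∂μ| := by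
        simp_rw [heq]
    _ ≤ ∑ i, ∫ S, |(1 / (n : ℝ)) * ∑ m, binLoss f (I i) (S m)| ∂μ :=
        Finset.sum_le_sum fun i _ => by
          simpa [Real.norm_eq_abs, abs_mul, abs_inv, Nat.abs_cast] using
            norm_integral_le_integral_norm (fun S : Fin n → X × ℝ =>
              (1 / (n : ℝ)) * ∑ m, binLoss f (I i) (S m)) (μ := μ)
    _ = ∫ S, ∑ i, |(1 / (n : ℝ)) * ∑ m, binLoss f (I i) (S m)| ∂μ :=
        (integral_finset_sum _ fun i _ => (hF i).abs).symm


end Calib
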